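/- arXiv:2212.13847 — 3 statements merged into one kernel-verified Lean document; each statement's English description precedes it below -/
import Mathlib

section
/- (Theorem 1, part 1.) Let E be a real inner product space, let a ∈ E with a ≠ 0 be the anchor embedding, let τ > 0, let n ≥ 1 and let z : Fin n → E be the negative-sample embeddings. For each index t, let F_t : E → ℝ be F_t(v) = log( exp(⟪a, v⟫/τ) + ∑_{j ≠ t} exp(⟪a, z j⟫/τ) ), the InfoNCE log-partition term as a function of the t-th negative embedding with the others fixed. If two indices t₁, t₂ satisfy ⟪a, z t₁⟫ > ⟪a, z t₂⟫, then the gradient of the loss with respect to the first negative sample is strictly larger in norm: ‖gradient F_{t₁} (z t₁)‖ > ‖gradient F_{t₂} (z t₂)‖. -/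
open Real Finset RealInnerProductSpace

lemma infoNCE_gradient_aux
    {E : Type*} [NormedAddCommGroup E] [InnerProductSpace ℝ E] [CompleteSpace E]
    (a : E) (τ : ℝ) (hτ : 0 < τ) (C : ℝ) (hC : 0 ≤ C) (x : E) :
    HasGradientAt (fun v : E => Real.log (Real.exp (⟪a, v⟫ / τ) + C))
      ((Real.exp (⟪a, x⟫ / τ) / (τ * (Real.exp (⟪a, x⟫ / τ) + C))) • a) x := by
  have hpos : 0 < Real.exp (⟪a, x⟫ / τ) + C := by positivity
  have h1 : HasFDerivAt (fun v : E => ⟪a, v⟫) (innerSL ℝ a) x :=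
    (innerSL ℝ a).hasFDerivAt
  have h2 : HasFDerivAt (fun v : E => ⟪a, v⟫ / τ) ((1 / τ) • innerSL ℝ a) x := by
    have := h1.const_mul (1 / τ)
    simpa [one_div, div_eq_inv_mul, mul_comm] using this
  have h3 : HasFDerivAt (fun v : E => Real.exp (⟪a, v⟫ / τ))
      (Real.exp (⟪a, x⟫ / τ) • ((1 / τ) • innerSL ℝ a)) x :=
    (Real.hasDerivAt_exp _).comp_hasFDerivAt x h2
  have h4 : HasFDerivAt (fun v : E => Real.exp (⟪a, v⟫ / τ) + C)
      (Real.exp (⟪a, x⟫ / τ) • ((1 / τ) • innerSL ℝ a)) x :=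
    h3.add_const C
  have h5 : HasFDerivAt (fun v : E => Real.log (Real.exp (⟪a, v⟫ / τ) + C))
      ((Real.exp (⟪a, x⟫ / τ) + C)⁻¹ • (Real.exp (⟪a, x⟫ / τ) •
        ((1 / τ) • innerSL ℝ a))) x :=
    h4.log hpos.ne'
  rw [hasGradientAt_iff_hasFDerivAt]
  refine h5.congr_fderiv ?_
  ext v
  simp [real_inner_smul_left]
  rw [div_eq_mul_inv _ (τ * _), mul_inv]
  ring

/-- Theorem 1, part 1: if a negative sample `z t₁` is more similar (in dot
product) to the anchor `a` than `z t₂`, then the gradient of the InfoNCE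
log-partition term with respect to `z t₁` is strictly larger in norm than the
gradient with respect to `z t₂`. -/
theorem infoNCE_neg_gradient_norm_lt
    {E : Type*} [NormedAddCommGroup E] [InnerProductSpace ℝ E] [CompleteSpace E]
    (a : E) (ha : a ≠ 0) (τ : ℝ) (hτ : 0 < τ) (n : ℕ) (hn : 1 ≤ n)
    (z : Fin n → E) (t₁ t₂ : Fin n)
    (hsim : ⟪a, z t₁⟫ > ⟪a, z t₂⟫) :
    ‖gradient
        (fun v : E => Real.log (Real.exp (⟪a, v⟫ / τ) +
          ∑ j ∈ Finset.univ.erase t₁, Real.exp (⟪a, z j⟫ / τ))) (z t₁)‖ >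
    ‖gradient
        (fun v : E => Real.log (Real.exp (⟪a, v⟫ / τ) +
          ∑ j ∈ Finset.univ.erase t₂, Real.exp (⟪a, z j⟫ / τ))) (z t₂)‖ := by
  set S : ℝ := ∑ j : Fin n, Real.exp (⟪a, z j⟫ / τ) with hS
  have hSpos : 0 < S := Finset.sum_pos (fun j _ => Real.exp_pos _)
    (Finset.univ_nonempty_iff.2 (Fin.pos_iff_nonempty.1 hn))
  have key : ∀ t : Fin n,
      Real.exp (⟪a, z t⟫ / τ) + ∑ j ∈ Finset.univ.erase t, Real.exp (⟪a, z j⟫ / τ) = S := by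
    intro t
    rw [hS, ← Finset.add_sum_erase _ _ (Finset.mem_univ t)]
  have grad : ∀ t : Fin n,
      gradient (fun v : E => Real.log (Real.exp (⟪a, v⟫ / τ) +
          ∑ j ∈ Finset.univ.erase t, Real.exp (⟪a, z j⟫ / τ))) (z t)
        = (Real.exp (⟪a, z t⟫ / τ) / (τ * S)) • a := by
    intro t
    have hC : (0:ℝ) ≤ ∑ j ∈ Finset.univ.erase t, Real.exp (⟪a, z j⟫ / τ) :=
      Finset.sum_nonneg fun j _ => (Real.exp_pos _).le
    have := (infoNCE_gradient_aux a τ hτ _ hC (z t)).gradient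
    rw [this, key t]
  rw [grad t₁, grad t₂, norm_smul, norm_smul]
  have hτS : 0 < τ * S := mul_pos hτ hSpos
  have hapos : 0 < ‖a‖ := norm_pos_iff.2 ha
  have h1 : Real.exp (⟪a, z t₂⟫ / τ) / (τ * S) < Real.exp (⟪a, z t₁⟫ / τ) / (τ * S) := by
    gcongr
  have habs : ∀ t : Fin n, ‖Real.exp (⟪a, z t⟫ / τ) / (τ * S)‖ =
      Real.exp (⟪a, z t⟫ / τ) / (τ * S) := fun t =>
    abs_of_pos (div_pos (Real.exp_pos _) hτS)
  rw [habs, habs]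
  exact mul_lt_mul_of_pos_right h1 hapos
end

section
/- (Theorem 1, part 2.) Let E be a real inner product space, let a ∈ E be the anchor embedding, let τ > 0, let n ≥ 1 and let z : Fin n → E be the negative-sample embeddings. For an index t, let F_t : E → ℝ be F_t(v) = log( exp(⟪a, v⟫/τ) + ∑_{j ≠ t} exp(⟪a, z j⟫/τ) ), the InfoNCE log-partition term as a function of the t-th negative embedding with the others fixed, and let G : E → ℝ be G(v) = -⟪a, v⟫/τ, the loss as a function of the positive embedding. Then for every t the gradient with respect to the positive sample is at least as large in norm as the gradient with respect to any negative sample: ‖gradient G p‖ ≥ ‖gradient F_t (z t)‖ (for any p ∈ E). -/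
open Real Finset RealInnerProductSpace

/-- Theorem 1, part 2: the norm of the gradient of the InfoNCE loss with respect
to the positive sample is at least the norm of the gradient with respect to any
negative sample. -/
theorem infoNCE_pos_gradient_norm_ge_neg
    {E : Type*} [NormedAddCommGroup E] [InnerProductSpace ℝ E] [CompleteSpace E]
    (a : E) (τ : ℝ) (hτ : 0 < τ) (n : ℕ) (hn : 1 ≤ n) (z : Fin n → E) :
    ∀ (t : Fin n) (p : E),
      ‖gradient (fun v : E => -⟪a, v⟫ / τ) p‖ ≥
      ‖gradient
          (fun v : E => Real.log (Real.exp (⟪a, v⟫ / τ) +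
            ∑ j ∈ Finset.univ.erase t, Real.exp (⟪a, z j⟫ / τ))) (z t)‖ := by
  intro t p
  set C : ℝ := ∑ j ∈ Finset.univ.erase t, Real.exp (⟪a, z j⟫ / τ) with hC
  have hC0 : 0 ≤ C := Finset.sum_nonneg fun j _ => (Real.exp_pos _).le
  set s : ℝ := ⟪a, z t⟫ / τ
  have hden : 0 < Real.exp s + C := by positivity
  -- gradient of G
  have hG : HasGradientAt (fun v : E => -⟪a, v⟫ / τ) ((-τ⁻¹) • a) p := by
    rw [hasGradientAt_iff_hasFDerivAt]
    have : HasFDerivAt (fun v : E => -⟪a, v⟫ / τ) ((-τ⁻¹) • (innerSL ℝ a)) p := by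
      have h1 : HasFDerivAt (fun v : E => ⟪a, v⟫) (innerSL ℝ a) p := (innerSL ℝ a).hasFDerivAt
      have := h1.const_smul (-τ⁻¹)
      refine this.congr_of_eventuallyEq (Filter.Eventually.of_forall fun v => ?_)
      show -⟪a, v⟫ / τ = -τ⁻¹ * ⟪a, v⟫
      ring
    refine this.congr_fderiv ?_
    ext v
    simp [real_inner_smul_left]
  -- gradient of F
  set c : ℝ := (Real.exp s + C)⁻¹ * (Real.exp s * τ⁻¹)
  have hF : HasGradientAt
      (fun v : E => Real.log (Real.exp (⟪a, v⟫ / τ) + C)) (c • a) (z t) := by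
    rw [hasGradientAt_iff_hasFDerivAt]
    have h1 : HasFDerivAt (fun v : E => ⟪a, v⟫ / τ) (τ⁻¹ • (innerSL ℝ a)) (z t) := by
      have := (innerSL ℝ a).hasFDerivAt (x := z t) |>.const_smul τ⁻¹
      refine this.congr_of_eventuallyEq (Filter.Eventually.of_forall fun v => ?_)
      show ⟪a, v⟫ / τ = τ⁻¹ * ⟪a, v⟫
      ring
    have h2 : HasFDerivAt (fun v : E => Real.exp (⟪a, v⟫ / τ) + C)
        ((Real.exp s * τ⁻¹) • (innerSL ℝ a)) (z t) := by
      have := (Real.hasDerivAt_exp (⟪a, z t⟫ / τ)).comp_hasFDerivAt (z t) h1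
      have h3 := this.add_const C
      refine h3.congr_fderiv ?_
      ext v
      simp [smul_smul, s]
    have h4 := (Real.hasDerivAt_log hden.ne').comp_hasFDerivAt (z t) h2
    refine h4.congr_fderiv ?_
    ext v
    simp [real_inner_smul_left, c, smul_smul]
  rw [hG.gradient, hF.gradient, norm_smul, norm_smul]
  have hc : |c| ≤ τ⁻¹ := by
    rw [abs_of_nonneg (by positivity)]
    have h1 : (Real.exp s + C)⁻¹ * Real.exp s ≤ 1 := by
      rw [inv_mul_le_one₀ hden]
      linarith
    calc c = ((Real.exp s + C)⁻¹ * Real.exp s) * τ⁻¹ := by ring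
      _ ≤ 1 * τ⁻¹ := by
          apply mul_le_mul_of_nonneg_right h1 (by positivity)
      _ = τ⁻¹ := one_mul _
  simp only [Real.norm_eq_abs]
  rw [show |(-τ⁻¹)| = τ⁻¹ by rw [abs_neg, abs_of_nonneg (by positivity : (0:ℝ) ≤ τ⁻¹)]]
  exact mul_le_mul_of_nonneg_right hc (norm_nonneg a)
end

section
/- (Strict version of Theorem 1, part 2.) Let E be a real inner product space, let a ∈ E with a ≠ 0 be the anchor embedding, let τ > 0, let n ≥ 2 and let z : Fin n → E be the negative-sample embeddings. For an index t, let F_t : E → ℝ be F_t(v) = log( exp(⟪a, v⟫/τ) + ∑_{j ≠ t} exp(⟪a, z j⟫/τ) ), and let G : E → ℝ be G(v) = -⟪a, v⟫/τ. Then the inequality between the positive-sample and negative-sample gradients is strict: for every t and every p ∈ E, ‖gradient G p‖ > ‖gradient F_t (z t)‖. (Equality in Theorem 1, part 2 would require the softmax coefficient exp(⟪a, z t⟫/τ) / ∑_{j=1}^{n} exp(⟪a, z j⟫/τ) to equal 1, which is impossible when there is more than one negative sample since every exponential is positive.) -/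
open Real Finset RealInnerProductSpace

lemma aux_hasGradientAt_smul_inner
    {E : Type*} [NormedAddCommGroup E] [InnerProductSpace ℝ E] [CompleteSpace E]
    (a : E) (c : ℝ) (h : ℝ → ℝ) (h' : ℝ) (p : E)
    (hh : HasDerivAt h h' (c * ⟪a, p⟫)) :
    HasGradientAt (fun v : E => h (c * ⟪a, v⟫)) ((c * h') • a) p := by
  have hg : HasFDerivAt (fun v : E => c * ⟪a, v⟫) (c • innerSL ℝ a) p :=
    ((innerSL ℝ a).hasFDerivAt).const_smul c
  have := hh.comp_hasFDerivAt p hg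
  rw [hasGradientAt_iff_hasFDerivAt]
  refine this.congr_fderiv ?_
  ext v
  simp [InnerProductSpace.toDual_apply_apply, real_inner_smul_left]
  ring

/-- Strict version of Theorem 1, part 2: with a nonzero anchor and at least two
negative samples, the norm of the gradient of the InfoNCE loss with respect to
the positive sample is strictly larger than the norm of the gradient with
respect to any negative sample. -/
theorem infoNCE_pos_gradient_norm_gt_neg
    {E : Type*} [NormedAddCommGroup E] [InnerProductSpace ℝ E] [CompleteSpace E]
    (a : E) (ha : a ≠ 0) (τ : ℝ) (hτ : 0 < τ) (n : ℕ) (hn : 2 ≤ n) (z : Fin n → E) :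
    ∀ (t : Fin n) (p : E),
      ‖gradient (fun v : E => -⟪a, v⟫ / τ) p‖ >
      ‖gradient
          (fun v : E => Real.log (Real.exp (⟪a, v⟫ / τ) +
            ∑ j ∈ Finset.univ.erase t, Real.exp (⟪a, z j⟫ / τ))) (z t)‖ := by
  intro t p
  set C : ℝ := ∑ j ∈ Finset.univ.erase t, Real.exp (⟪a, z j⟫ / τ) with hC
  have hCpos : 0 < C := by
    apply Finset.sum_pos (fun j _ => Real.exp_pos _)
    rw [Finset.erase_nonempty (Finset.mem_univ t)]
    have : 1 < (Finset.univ : Finset (Fin n)).card := by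
      simpa using lt_of_lt_of_le one_lt_two hn
    exact Finset.one_lt_card.mp this
  -- gradient of G
  have hG : HasGradientAt (fun v : E => -⟪a, v⟫ / τ) ((τ⁻¹ * (-1)) • a) p := by
    have := aux_hasGradientAt_smul_inner a τ⁻¹ (fun y => -y) (-1) p (hasDerivAt_neg _)
    convert this using 2 with v
    field_simp
  -- gradient of F
  set y0 : ℝ := τ⁻¹ * ⟪a, z t⟫ with hy0
  have hsum : 0 < Real.exp y0 + C := by positivity
  have hder : HasDerivAt (fun y : ℝ => Real.log (Real.exp y + C))
      (Real.exp y0 / (Real.exp y0 + C)) y0 := by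
    simpa using ((Real.hasDerivAt_exp y0).add_const C).log (ne_of_gt hsum)
  have hF : HasGradientAt
      (fun v : E => Real.log (Real.exp (⟪a, v⟫ / τ) + C))
      ((τ⁻¹ * (Real.exp y0 / (Real.exp y0 + C))) • a) (z t) := by
    have := aux_hasGradientAt_smul_inner a τ⁻¹ (fun y => Real.log (Real.exp y + C))
      (Real.exp y0 / (Real.exp y0 + C)) (z t) hder
    convert this using 2 with v
    rw [div_eq_inv_mul]
  rw [hG.gradient, hF.gradient]
  rw [norm_smul, norm_smul]
  have hanorm : 0 < ‖a‖ := norm_pos_iff.mpr ha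
  have h1 : Real.exp y0 / (Real.exp y0 + C) < 1 := by
    rw [div_lt_one hsum]; linarith
  have h2 : 0 < Real.exp y0 / (Real.exp y0 + C) := by positivity
  have : |τ⁻¹ * (Real.exp y0 / (Real.exp y0 + C))| < |τ⁻¹ * (-1)| := by
    rw [abs_mul, abs_mul, abs_of_pos (inv_pos.mpr hτ)]
    rw [abs_of_pos h2, abs_neg, abs_one, mul_one]
    exact mul_lt_of_lt_one_right (inv_pos.mpr hτ) h1
  exact mul_lt_mul_of_pos_right this hanorm
end
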